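/- Fix γ ∈ (−3, 0). Suppose additionally that ∫_{𝕊²} B(ω) dω > 0. Then there exist constants 0 < c ≤ C such that for all v ∈ ℝ³, c (1 + |v|)^γ ≤ ν(v) ≤ C (1 + |v|)^γ; that is, the collision frequency ν is equivalent to the weight function w(v) = (1 + |v|)^γ. -/

import Mathlib

open MeasureTheory Real Set

noncomputable section

/-- Velocity space ℝ³. -/
abbrev R3 := EuclideanSpace ℝ (Fin 3)

/-- The unit sphere 𝕊² ⊆ ℝ³. -/
abbrev Sphere2 := Metric.sphere (0 : R3) 1

/-- The surface measure dω on 𝕊². -/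
def sphMeasure : Measure Sphere2 := (volume : Measure R3).toSphere

/-- Post-collision velocity u′ = u + ((v − u)·ω)ω. -/
def uPost (u v : R3) (ω : Sphere2) : R3 := u + (inner ℝ (v - u) (ω : R3) : ℝ) • (ω : R3)

/-- Post-collision velocity v′ = v + ((u − v)·ω)ω. -/
def vPost (u v : R3) (ω : Sphere2) : R3 := v + (inner ℝ (u - v) (ω : R3) : ℝ) • (ω : R3)

/-- The weight function w(v) = (1 + |v|)^γ. -/
def wt (γ : ℝ) (v : R3) : ℝ := (1 + ‖v‖) ^ γ

/-- The collision frequency ν(v) = ∫∫ |u−v|^γ B(ω) e^{−|u|²} dω du. -/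
def nu (γ : ℝ) (B : Sphere2 → ℝ) (v : R3) : ℝ :=
  ∫ u : R3, ∫ ω : Sphere2, ‖u - v‖ ^ γ * B ω * Real.exp (-‖u‖ ^ 2) ∂sphMeasure

/-- K₂ g (v) = ∫∫ |u−v|^γ B(ω) e^{−|u|²/2} ( e^{−|v′|²/2} g(u′) + e^{−|u′|²/2} g(v′) ) dω du. -/
def K2op (γ : ℝ) (B : Sphere2 → ℝ) (g : R3 → ℝ) (v : R3) : ℝ :=
  ∫ u : R3, ∫ ω : Sphere2, ‖u - v‖ ^ γ * B ω * Real.exp (-‖u‖ ^ 2 / 2) *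
    (Real.exp (-‖vPost u v ω‖ ^ 2 / 2) * g (uPost u v ω)
      + Real.exp (-‖uPost u v ω‖ ^ 2 / 2) * g (vPost u v ω)) ∂sphMeasure

/-- K₁ g (v) = e^{−|v|²/2} ∫∫ |u−v|^γ B(ω) e^{−|u|²/2} g(u) dω du. -/
def K1op (γ : ℝ) (B : Sphere2 → ℝ) (g : R3 → ℝ) (v : R3) : ℝ :=
  Real.exp (-‖v‖ ^ 2 / 2) *
    ∫ u : R3, ∫ ω : Sphere2, ‖u - v‖ ^ γ * B ω * Real.exp (-‖u‖ ^ 2 / 2) * g u ∂sphMeasure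

/-- K = K₂ − K₁. -/
def Kop (γ : ℝ) (B : Sphere2 → ℝ) (g : R3 → ℝ) (v : R3) : ℝ :=
  K2op γ B g v - K1op γ B g v

/-- The linearized collision operator L g = ν g − K g. -/
def Lop (γ : ℝ) (B : Sphere2 → ℝ) (g : R3 → ℝ) (v : R3) : ℝ :=
  nu γ B v * g v - Kop γ B g v

/-- Gain term Γ₊(g₁,g₂)(v). -/
def GammaPlus (γ : ℝ) (B : Sphere2 → ℝ) (g₁ g₂ : R3 → ℝ) (v : R3) : ℝ :=
  ∫ u : R3, ∫ ω : Sphere2, ‖u - v‖ ^ γ * B ω * Real.exp (-‖u‖ ^ 2 / 2) *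
    (g₁ (uPost u v ω) * g₂ (vPost u v ω)) ∂sphMeasure

/-- Loss term Γ₋(g₁,g₂)(v). -/
def GammaMinus (γ : ℝ) (B : Sphere2 → ℝ) (g₁ g₂ : R3 → ℝ) (v : R3) : ℝ :=
  ∫ u : R3, ∫ ω : Sphere2, ‖u - v‖ ^ γ * B ω * Real.exp (-‖u‖ ^ 2 / 2) *
    (g₁ u * g₂ v) ∂sphMeasure

/-- Γ = Γ₊ − Γ₋. -/
def GammaOp (γ : ℝ) (B : Sphere2 → ℝ) (g₁ g₂ : R3 → ℝ) (v : R3) : ℝ :=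
  GammaPlus γ B g₁ g₂ v - GammaMinus γ B g₁ g₂ v

/-- Partial derivative in the i-th coordinate direction. -/
def pd (i : Fin 3) (g : R3 → ℝ) : R3 → ℝ :=
  fun v => fderiv ℝ g v (EuclideanSpace.single i 1)

/-- Multi-index derivative ∂_β = ∂_v^β. -/
def pdM (β : Fin 3 → ℕ) (g : R3 → ℝ) : R3 → ℝ :=
  (pd 0)^[β 0] ((pd 1)^[β 1] ((pd 2)^[β 2] g))

/-- Order |β| of a multi-index. -/
def deg (β : Fin 3 → ℕ) : ℕ := ∑ i, β i

/-- The finite set of multi-indices β with |β| ≤ N. -/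
def MIdx (N : ℕ) : Finset (Fin 3 → ℕ) :=
  (Fintype.piFinset fun _ : Fin 3 => Finset.range (N + 1)).filter (fun β => deg β ≤ N)

/-- Squared weighted L² norm ‖w^θ g‖². -/
def wNormSq (γ θ : ℝ) (g : R3 → ℝ) : ℝ := ∫ v : R3, (wt γ v ^ θ * g v) ^ 2

/-- Squared weighted L²_ν norm ‖w^θ g‖_ν². -/
def wNuNormSq (γ : ℝ) (B : Sphere2 → ℝ) (θ : ℝ) (g : R3 → ℝ) : ℝ :=
  ∫ v : R3, nu γ B v * (wt γ v ^ θ * g v) ^ 2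


section AuxNu
open Metric

lemma finrank_R3 : Module.finrank ℝ R3 = 3 := by simp

lemma meas_rpow_norm (v : R3) (γ : ℝ) : Measurable fun u : R3 => ‖u - v‖ ^ γ := by fun_prop
lemma integrableOn_rpow_norm_ball {γ : ℝ} (hγ : -3 < γ) (hγ0 : γ < 0) :
    IntegrableOn (fun x : R3 => ‖x‖ ^ γ) (Metric.ball (0 : R3) 1) := by
  have hmeas : Measurable fun x : R3 => ‖x‖ ^ γ := by fun_prop
  refine ⟨hmeas.aestronglyMeasurable, ?_⟩
  rw [HasFiniteIntegral, lintegral_enorm_of_nonneg fun x => rpow_nonneg (norm_nonneg _) _]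
  rw [lintegral_eq_lintegral_meas_le _ (ae_of_all _ fun x => rpow_nonneg (norm_nonneg _) _)
      hmeas.aemeasurable]
  set μ' := (volume : Measure R3).restrict (Metric.ball (0 : R3) 1)
  set mB := (volume : Measure R3) (Metric.ball (0 : R3) 1) with hmB
  have hmBlt : mB < ⊤ := measure_ball_lt_top
  calc ∫⁻ t in Ioi (0:ℝ), μ' {a | t ≤ ‖a‖ ^ γ}
      ≤ ∫⁻ t in Ioc (0:ℝ) 1 ∪ Ioi 1, μ' {a | t ≤ ‖a‖ ^ γ} :=
        lintegral_mono_set Ioi_subset_Ioc_union_Ioi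
    _ ≤ (∫⁻ t in Ioc (0:ℝ) 1, μ' {a | t ≤ ‖a‖ ^ γ}) + ∫⁻ t in Ioi (1:ℝ), μ' {a | t ≤ ‖a‖ ^ γ} :=
        lintegral_union_le _ _ _
    _ < ⊤ := by
        refine ENNReal.add_lt_top.2 ⟨?_, ?_⟩
        · calc (∫⁻ t in Ioc (0:ℝ) 1, μ' {a | t ≤ ‖a‖ ^ γ})
              ≤ ∫⁻ _ in Ioc (0:ℝ) 1, mB := by
                refine lintegral_mono fun t => ?_
                calc μ' {a | t ≤ ‖a‖ ^ γ} ≤ μ' univ := measure_mono (subset_univ _)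
                  _ = mB := by simp only [μ', mB, Measure.restrict_apply_univ]
            _ < ⊤ := by
                rw [setLIntegral_const]
                exact ENNReal.mul_lt_top hmBlt (by simp)
        · have hsub : ∀ t : ℝ, 1 < t → {a : R3 | t ≤ ‖a‖ ^ γ} ⊆
              Metric.closedBall 0 (t ^ γ⁻¹) := by
            intro t ht a ha
            simp only [mem_setOf_eq] at ha
            have h0 : (0:ℝ) < ‖a‖ := by
              rcases eq_or_lt_of_le (norm_nonneg a) with h | h
              · exfalso
                rw [← h, Real.zero_rpow (ne_of_lt hγ0)] at ha
                linarith
              · exact h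
            have := (Real.le_rpow_inv_iff_of_neg h0 (by linarith : (0:ℝ) < t) hγ0).2 ha
            simpa [Metric.mem_closedBall, dist_zero_right] using this
          have hbound : ∀ t ∈ Ioi (1:ℝ), μ' {a | t ≤ ‖a‖ ^ γ} ≤
              ENNReal.ofReal (t ^ (γ⁻¹ * 3)) * mB := by
            intro t ht
            have ht1 : (1:ℝ) < t := ht
            calc μ' {a | t ≤ ‖a‖ ^ γ} ≤ volume {a : R3 | t ≤ ‖a‖ ^ γ} :=
                  Measure.restrict_apply_le _ _
              _ ≤ volume (Metric.closedBall (0:R3) (t ^ γ⁻¹)) :=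
                  measure_mono (hsub t ht1)
              _ = ENNReal.ofReal ((t ^ γ⁻¹) ^ Module.finrank ℝ R3) * mB :=
                  Measure.addHaar_closedBall _ _ (rpow_nonneg (by linarith) _)
              _ = ENNReal.ofReal (t ^ (γ⁻¹ * 3)) * mB := by
                  rw [finrank_R3, ← Real.rpow_natCast (t ^ γ⁻¹) 3,
                    ← Real.rpow_mul (by linarith : (0:ℝ) ≤ t)]
                  norm_num
          calc ∫⁻ t in Ioi (1:ℝ), μ' {a | t ≤ ‖a‖ ^ γ}
              ≤ ∫⁻ t in Ioi (1:ℝ), ENNReal.ofReal (t ^ (γ⁻¹ * 3)) * mB :=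
                setLIntegral_mono' measurableSet_Ioi hbound
            _ = (∫⁻ t in Ioi (1:ℝ), ENNReal.ofReal (t ^ (γ⁻¹ * 3))) * mB :=
                lintegral_mul_const' _ _ hmBlt.ne
            _ < ⊤ := by
                refine ENNReal.mul_lt_top ?_ hmBlt
                have hexp : γ⁻¹ * 3 < -1 := by
                  rw [inv_mul_eq_div, div_lt_iff_of_neg hγ0]
                  linarith
                exact (integrableOn_Ioi_rpow_of_lt hexp one_pos).setLIntegral_lt_top

lemma integrable_gauss : Integrable (fun u : R3 => Real.exp (-‖u‖ ^ 2)) := by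
  have h := (GaussianFourier.integrable_cexp_neg_mul_sq_norm_add (V := R3) (b := 1)
      (by norm_num) 0 (0 : R3)).norm
  refine h.congr (ae_of_all _ fun u => ?_)
  simp only [Complex.norm_exp, mul_zero, zero_mul, add_zero]
  congr 1
  rw [neg_mul, one_mul, Complex.neg_re, ← Complex.ofReal_pow, Complex.ofReal_re]

lemma preimage_add_ball' (v c : R3) (r : ℝ) :
    (fun x : R3 => x + v) ⁻¹' (Metric.ball (c + v) r) = Metric.ball c r := by
  ext x
  simp [Metric.mem_ball, dist_eq_norm, add_sub_add_right_eq_sub]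

lemma integrableOn_rpow_norm_ball_translate {γ : ℝ} (hγ : -3 < γ) (hγ0 : γ < 0) (v : R3) :
    IntegrableOn (fun u : R3 => ‖u - v‖ ^ γ) (Metric.ball v 1) := by
  have hmp := measurePreserving_add_right (volume : Measure R3) v
  have hemb : MeasurableEmbedding (fun x : R3 => x + v) :=
    (MeasurableEquiv.addRight v).measurableEmbedding
  have := (hmp.integrableOn_comp_preimage hemb
    (f := fun u : R3 => ‖u - v‖ ^ γ) (s := Metric.ball v 1))
  rw [show Metric.ball v 1 = Metric.ball ((0 : R3) + v) 1 by rw [zero_add],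
    preimage_add_ball'] at this
  rw [show Metric.ball v 1 = Metric.ball ((0 : R3) + v) 1 by rw [zero_add]]
  rw [← this]
  refine (integrableOn_rpow_norm_ball hγ hγ0).congr_fun (fun x _ => ?_) measurableSet_ball
  simp [Function.comp]

lemma integrable_f {γ : ℝ} (hγ : -3 < γ) (hγ0 : γ < 0) (v : R3) :
    Integrable (fun u : R3 => ‖u - v‖ ^ γ * Real.exp (-‖u‖ ^ 2)) := by
  have hmeas : Measurable fun u : R3 => ‖u - v‖ ^ γ * Real.exp (-‖u‖ ^ 2) := by fun_prop
  have h1 : IntegrableOn (fun u : R3 => ‖u - v‖ ^ γ * Real.exp (-‖u‖ ^ 2)) (Metric.ball v 1) := by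
    refine (integrableOn_rpow_norm_ball_translate hγ hγ0 v).mono' hmeas.aestronglyMeasurable
      (ae_of_all _ fun u => ?_)
    rw [Real.norm_eq_abs, abs_of_nonneg (by positivity)]
    exact mul_le_of_le_one_right (rpow_nonneg (norm_nonneg _) _)
      (Real.exp_le_one_iff.2 (neg_nonpos.2 (by positivity)))
  have h2 : IntegrableOn (fun u : R3 => ‖u - v‖ ^ γ * Real.exp (-‖u‖ ^ 2))
      (Metric.ball v 1)ᶜ := by
    refine (integrable_gauss.integrableOn).mono' hmeas.aestronglyMeasurable ?_
    refine (ae_restrict_iff' measurableSet_ball.compl).2 (ae_of_all _ fun u hu => ?_)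
    rw [Real.norm_eq_abs, abs_of_nonneg (by positivity)]
    have h1u : (1 : ℝ) ≤ ‖u - v‖ := by
      simp only [mem_compl_iff, Metric.mem_ball, dist_eq_norm, not_lt] at hu
      exact hu
    exact mul_le_of_le_one_left (Real.exp_nonneg _)
      (Real.rpow_le_one_of_one_le_of_nonpos h1u hγ0.le)
  have := h1.union h2
  rwa [union_compl_self, integrableOn_univ] at this

lemma ae_ne_pt (v : R3) : ∀ᵐ u : R3 ∂volume, u ≠ v := by
  have h : (volume : Measure R3) {v} = 0 := measure_singleton v
  rw [ae_iff]
  convert h using 2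
  ext u
  simp

lemma decay_bound (t : ℝ) (ht : 0 ≤ t) :
    Real.exp (-(max 0 ((t - 1) / 2)) ^ 2) * (1 + t) ^ (6 : ℕ) ≤ 24576 := by
  rcases le_or_gt t 3 with h3 | h3
  · have h1 : Real.exp (-(max 0 ((t - 1) / 2)) ^ 2) ≤ 1 :=
      Real.exp_le_one_iff.2 (neg_nonpos.2 (by positivity))
    have h2 : (1 + t) ^ (6 : ℕ) ≤ (4 : ℝ) ^ (6 : ℕ) :=
      pow_le_pow_left₀ (by linarith) (by linarith) 6
    have h0 : (0:ℝ) ≤ (1 + t) ^ (6 : ℕ) := by positivity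
    nlinarith
  · set m := (t - 1) / 2 with hm
    have hm1 : (1 : ℝ) ≤ m := by rw [hm]; linarith
    have hmax : max 0 m = m := max_eq_right (by linarith)
    rw [hmax]
    set E := Real.exp (m ^ 2) with hE
    have hEpos : 0 < E := Real.exp_pos _
    have hexp : m ^ 6 / 6 ≤ E := by
      have h := Real.sum_le_exp_of_nonneg (x := m ^ 2) (by positivity) 4
      refine le_trans ?_ h
      rw [Finset.sum_range_succ]
      have h36 : ((Nat.factorial 3 : ℕ) : ℝ) = 6 := by norm_num [Nat.factorial]
      have heq : (m ^ 2) ^ 3 / ((Nat.factorial 3 : ℕ) : ℝ) = m ^ 6 / 6 := by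
        rw [h36]; ring
      rw [heq]
      have hnn : 0 ≤ ∑ i ∈ Finset.range 3, (m ^ 2) ^ i / (i.factorial : ℝ) := by
        refine Finset.sum_nonneg fun i _ => ?_
        positivity
      linarith
    have hexp' : Real.exp (-m ^ 2) * m ^ 6 ≤ 6 := by
      rw [Real.exp_neg, ← hE]
      have hle : m ^ 6 ≤ 6 * E := by linarith
      calc E⁻¹ * m ^ 6 ≤ E⁻¹ * (6 * E) :=
            mul_le_mul_of_nonneg_left hle (inv_nonneg.2 hEpos.le)
        _ = 6 := by field_simp
    have h1t6 : (1 + t) ^ (6 : ℕ) ≤ 4096 * m ^ 6 := by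
      have h1t : (1 + t : ℝ) = 2 * m + 2 := by rw [hm]; ring
      rw [h1t]
      calc (2 * m + 2 : ℝ) ^ 6 ≤ (4 * m) ^ 6 :=
            pow_le_pow_left₀ (by linarith) (by linarith) 6
        _ = 4096 * m ^ 6 := by ring
    calc Real.exp (-m ^ 2) * (1 + t) ^ (6 : ℕ)
        ≤ Real.exp (-m ^ 2) * (4096 * m ^ 6) :=
          mul_le_mul_of_nonneg_left h1t6 (Real.exp_nonneg _)
      _ = 4096 * (Real.exp (-m ^ 2) * m ^ 6) := by ring
      _ ≤ 4096 * 6 := mul_le_mul_of_nonneg_left hexp' (by norm_num)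
      _ = 24576 := by norm_num

lemma I_lower {γ : ℝ} (hγ : -3 < γ) (hγ0 : γ < 0) (v : R3) :
    Real.exp (-1) * ((volume : Measure R3) (Metric.ball 0 1)).toReal * (1 + ‖v‖) ^ γ ≤
      ∫ u : R3, ‖u - v‖ ^ γ * Real.exp (-‖u‖ ^ 2) := by
  have hint := integrable_f hγ hγ0 v
  have hnn : ∀ u : R3, 0 ≤ ‖u - v‖ ^ γ * Real.exp (-‖u‖ ^ 2) := fun u => by positivity
  have step1 : (∫ u in Metric.ball (0 : R3) 1, ‖u - v‖ ^ γ * Real.exp (-‖u‖ ^ 2)) ≤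
      ∫ u : R3, ‖u - v‖ ^ γ * Real.exp (-‖u‖ ^ 2) :=
    setIntegral_le_integral hint (ae_of_all _ hnn)
  have step2 : (∫ _u in Metric.ball (0 : R3) 1, (1 + ‖v‖) ^ γ * Real.exp (-1) : ℝ) ≤
      ∫ u in Metric.ball (0 : R3) 1, ‖u - v‖ ^ γ * Real.exp (-‖u‖ ^ 2) := by
    refine setIntegral_mono_ae_restrict (integrableOn_const measure_ball_lt_top.ne)
      hint.integrableOn ?_
    filter_upwards [ae_restrict_mem measurableSet_ball, ae_restrict_of_ae (ae_ne_pt v)]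
      with u hu hne
    have hu1 : ‖u‖ < 1 := by simpa [mem_ball_zero_iff] using hu
    have h0 : 0 < ‖u - v‖ := by
      rw [norm_pos_iff]
      exact sub_ne_zero.2 hne
    have hle : ‖u - v‖ ≤ 1 + ‖v‖ := (norm_sub_le _ _).trans (by linarith)
    have ha : (1 + ‖v‖) ^ γ ≤ ‖u - v‖ ^ γ := Real.rpow_le_rpow_of_nonpos h0 hle hγ0.le
    have hb : Real.exp (-1) ≤ Real.exp (-‖u‖ ^ 2) := by
      apply Real.exp_le_exp.2
      nlinarith [norm_nonneg u]
    exact mul_le_mul ha hb (Real.exp_pos _).le (rpow_nonneg h0.le _)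
  rw [setIntegral_const] at step2
  calc Real.exp (-1) * ((volume : Measure R3) (Metric.ball 0 1)).toReal * (1 + ‖v‖) ^ γ
      = ((volume : Measure R3) (Metric.ball 0 1)).toReal • ((1 + ‖v‖) ^ γ * Real.exp (-1)) := by
        rw [smul_eq_mul]; ring
    _ ≤ _ := le_trans step2 step1

lemma integrableOn_rpow_norm_ballR {γ : ℝ} (hγ : -3 < γ) (hγ0 : γ < 0) (R : ℝ) :
    IntegrableOn (fun x : R3 => ‖x‖ ^ γ) (Metric.ball (0 : R3) R) := by
  have hmeas : Measurable fun x : R3 => ‖x‖ ^ γ := by fun_prop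
  rcases le_total R 1 with h | h
  · exact (integrableOn_rpow_norm_ball hγ hγ0).mono_set (ball_subset_ball h)
  · have hcover : Metric.ball (0 : R3) R =
        Metric.ball (0 : R3) 1 ∪ (Metric.ball (0 : R3) R \ Metric.ball (0 : R3) 1) :=
      (union_diff_cancel (ball_subset_ball h)).symm
    rw [hcover]
    refine (integrableOn_rpow_norm_ball hγ hγ0).union ?_
    have hms : MeasurableSet (Metric.ball (0 : R3) R \ Metric.ball (0 : R3) 1) :=
      measurableSet_ball.diff measurableSet_ball
    refine Integrable.mono' (g := fun _ => (1 : ℝ))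
      (integrableOn_const ((measure_mono diff_subset).trans_lt measure_ball_lt_top).ne)
      hmeas.aestronglyMeasurable ?_
    refine (ae_restrict_iff' hms).2 (ae_of_all _ fun x hx => ?_)
    have h1x : (1 : ℝ) ≤ ‖x‖ := by
      have := hx.2
      simpa [mem_ball_zero_iff, not_lt] using this
    rw [Real.norm_eq_abs, abs_of_nonneg (rpow_nonneg (norm_nonneg _) _)]
    exact Real.rpow_le_one_of_one_le_of_nonpos h1x hγ0.le

lemma J_le {γ : ℝ} (hγ : -3 < γ) (hγ0 : γ < 0) (r : ℝ) :
    (∫ x in Metric.ball (0 : R3) r, ‖x‖ ^ γ) ≤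
      (∫ x in Metric.ball (0 : R3) 1, ‖x‖ ^ γ) +
        (max 1 r) ^ (3 : ℕ) * ((volume : Measure R3) (Metric.ball 0 1)).toReal := by
  set R := max 1 r with hR
  have hR1 : (1 : ℝ) ≤ R := le_max_left _ _
  have step1 : (∫ x in Metric.ball (0 : R3) r, ‖x‖ ^ γ) ≤
      ∫ x in Metric.ball (0 : R3) R, ‖x‖ ^ γ := by
    refine setIntegral_mono_set (integrableOn_rpow_norm_ballR hγ hγ0 R)
      (ae_of_all _ fun x => rpow_nonneg (norm_nonneg _) _)
      (HasSubset.Subset.eventuallyLE (ball_subset_ball (le_max_right _ _)))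
  have hcover : Metric.ball (0 : R3) R =
      Metric.ball (0 : R3) 1 ∪ (Metric.ball (0 : R3) R \ Metric.ball (0 : R3) 1) :=
    (union_diff_cancel (ball_subset_ball hR1)).symm
  have hms : MeasurableSet (Metric.ball (0 : R3) R \ Metric.ball (0 : R3) 1) :=
    measurableSet_ball.diff measurableSet_ball
  have hsplit : (∫ x in Metric.ball (0 : R3) R, ‖x‖ ^ γ) =
      (∫ x in Metric.ball (0 : R3) 1, ‖x‖ ^ γ) +
        ∫ x in Metric.ball (0 : R3) R \ Metric.ball (0 : R3) 1, ‖x‖ ^ γ := by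
    have h := setIntegral_union (μ := (volume : Measure R3))
      (f := fun x : R3 => ‖x‖ ^ γ) disjoint_sdiff_self_right hms
      (integrableOn_rpow_norm_ball hγ hγ0)
      ((integrableOn_rpow_norm_ballR hγ hγ0 R).mono_set diff_subset)
    rwa [← hcover] at h
  have hdiff : (∫ x in Metric.ball (0 : R3) R \ Metric.ball (0 : R3) 1, ‖x‖ ^ γ) ≤
      R ^ (3 : ℕ) * ((volume : Measure R3) (Metric.ball 0 1)).toReal := by
    have h1 : (∫ x in Metric.ball (0 : R3) R \ Metric.ball (0 : R3) 1, ‖x‖ ^ γ) ≤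
        ∫ _x in Metric.ball (0 : R3) R \ Metric.ball (0 : R3) 1, (1 : ℝ) := by
      refine setIntegral_mono_on ((integrableOn_rpow_norm_ballR hγ hγ0 R).mono_set diff_subset)
        (integrableOn_const ((measure_mono diff_subset).trans_lt measure_ball_lt_top).ne)
        hms fun x hx => ?_
      have h1x : (1 : ℝ) ≤ ‖x‖ := by simpa [mem_ball_zero_iff, not_lt] using hx.2
      exact Real.rpow_le_one_of_one_le_of_nonpos h1x hγ0.le
    rw [setIntegral_const, smul_eq_mul, mul_one] at h1
    refine h1.trans ?_
    have h2 : ((volume : Measure R3) (Metric.ball 0 R \ Metric.ball 0 1)).toReal ≤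
        ((volume : Measure R3) (Metric.ball 0 R)).toReal :=
      ENNReal.toReal_mono measure_ball_lt_top.ne (measure_mono diff_subset)
    refine h2.trans ?_
    rw [Measure.addHaar_ball _ _ (by linarith : (0:ℝ) ≤ R), ENNReal.toReal_mul,
      ENNReal.toReal_ofReal (by positivity), finrank_R3]
  calc (∫ x in Metric.ball (0 : R3) r, ‖x‖ ^ γ) ≤ _ := step1
    _ = _ := hsplit
    _ ≤ _ := by
      gcongr

lemma translate_setIntegral (γ : ℝ) (v : R3) (r : ℝ) :
    (∫ u in Metric.ball v r, ‖u - v‖ ^ γ) = ∫ x in Metric.ball (0 : R3) r, ‖x‖ ^ γ := by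
  have hmp := measurePreserving_add_right (volume : Measure R3) v
  have hemb : MeasurableEmbedding (fun x : R3 => x + v) :=
    (MeasurableEquiv.addRight v).measurableEmbedding
  have h := hmp.setIntegral_preimage_emb hemb (fun u : R3 => ‖u - v‖ ^ γ) (Metric.ball v r)
  rw [show Metric.ball v r = Metric.ball ((0 : R3) + v) r by rw [zero_add],
    preimage_add_ball'] at h
  rw [show Metric.ball v r = Metric.ball ((0 : R3) + v) r by rw [zero_add], ← h]
  refine setIntegral_congr_fun measurableSet_ball fun x _ => ?_
  simp

lemma translate_integrableOn {γ : ℝ} (hγ : -3 < γ) (hγ0 : γ < 0) (v : R3) (r : ℝ) :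
    IntegrableOn (fun u : R3 => ‖u - v‖ ^ γ) (Metric.ball v r) := by
  have hmp := measurePreserving_add_right (volume : Measure R3) v
  have hemb : MeasurableEmbedding (fun x : R3 => x + v) :=
    (MeasurableEquiv.addRight v).measurableEmbedding
  have h := (hmp.integrableOn_comp_preimage hemb
    (f := fun u : R3 => ‖u - v‖ ^ γ) (s := Metric.ball v r))
  rw [show Metric.ball v r = Metric.ball ((0 : R3) + v) r by rw [zero_add],
    preimage_add_ball'] at h
  rw [show Metric.ball v r = Metric.ball ((0 : R3) + v) r by rw [zero_add], ← h]
  refine (integrableOn_rpow_norm_ballR hγ hγ0 r).congr_fun (fun x _ => ?_) measurableSet_ball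
  simp [Function.comp]

lemma I_upper {γ : ℝ} (hγ : -3 < γ) (hγ0 : γ < 0) (v : R3) :
    (∫ u : R3, ‖u - v‖ ^ γ * Real.exp (-‖u‖ ^ 2)) ≤
      (24576 * ((∫ x in Metric.ball (0 : R3) 1, ‖x‖ ^ γ) +
          ((volume : Measure R3) (Metric.ball 0 1)).toReal) +
        (∫ u : R3, Real.exp (-‖u‖ ^ 2)) / (2 : ℝ) ^ γ) * (1 + ‖v‖) ^ γ := by
  set J1 := ∫ x in Metric.ball (0 : R3) 1, ‖x‖ ^ γ with hJ1def
  set Vb := ((volume : Measure R3) (Metric.ball 0 1)).toReal with hVbdef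
  set G := ∫ u : R3, Real.exp (-‖u‖ ^ 2) with hGdef
  have hJ1nn : 0 ≤ J1 :=
    setIntegral_nonneg measurableSet_ball fun x _ => rpow_nonneg (norm_nonneg _) _
  have hVbnn : 0 ≤ Vb := ENNReal.toReal_nonneg
  have hGnn : 0 ≤ G := integral_nonneg fun u => (Real.exp_pos _).le
  set t := ‖v‖ with htdef
  have ht : 0 ≤ t := norm_nonneg v
  have hb1 : (1 : ℝ) ≤ 1 + t := by linarith
  set r := (1 + t) / 2 with hrdef
  have hr : 0 < r := by rw [hrdef]; linarith
  have hint := integrable_f hγ hγ0 v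
  have hsplit := integral_add_compl (measurableSet_ball (x := v) (ε := r)) hint
  set m := max 0 ((t - 1) / 2) with hmdef
  have hm0 : 0 ≤ m := le_max_left _ _
  set E := Real.exp (-m ^ 2) with hEdef
  have hEnn : 0 ≤ E := (Real.exp_pos _).le
  have hterm1 : (∫ u in Metric.ball v r, ‖u - v‖ ^ γ * Real.exp (-‖u‖ ^ 2)) ≤
      (J1 + (1 + t) ^ (3 : ℕ) * Vb) * E := by
    have hstep : (∫ u in Metric.ball v r, ‖u - v‖ ^ γ * Real.exp (-‖u‖ ^ 2)) ≤
        ∫ u in Metric.ball v r, ‖u - v‖ ^ γ * E := by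
      refine setIntegral_mono_on hint.integrableOn
        ((translate_integrableOn hγ hγ0 v r).mul_const E) measurableSet_ball fun u hu => ?_
      have hnu : ‖u - v‖ < r := by
        rw [Metric.mem_ball, dist_eq_norm] at hu
        exact hu
      have hge : m ≤ ‖u‖ := by
        refine max_le (norm_nonneg u) ?_
        have h := norm_sub_norm_le v u
        rw [norm_sub_rev v u] at h
        have : t - r = (t - 1) / 2 := by rw [hrdef]; ring
        linarith
      have hexp : Real.exp (-‖u‖ ^ 2) ≤ E := Real.exp_le_exp.2 (by nlinarith)
      exact mul_le_mul_of_nonneg_left hexp (rpow_nonneg (norm_nonneg _) _)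
    refine hstep.trans ?_
    rw [integral_mul_const, translate_setIntegral]
    refine mul_le_mul_of_nonneg_right ?_ hEnn
    refine (J_le hγ hγ0 r).trans ?_
    have hmaxle : max 1 r ≤ 1 + t := by
      refine max_le hb1 ?_
      rw [hrdef]; linarith
    have : (max 1 r) ^ (3 : ℕ) ≤ (1 + t) ^ (3 : ℕ) :=
      pow_le_pow_left₀ (le_trans zero_le_one (le_max_left _ _)) hmaxle 3
    nlinarith
  have hterm2 : (∫ u in (Metric.ball v r)ᶜ, ‖u - v‖ ^ γ * Real.exp (-‖u‖ ^ 2)) ≤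
      G / (2 : ℝ) ^ γ * (1 + t) ^ γ := by
    have hstep : (∫ u in (Metric.ball v r)ᶜ, ‖u - v‖ ^ γ * Real.exp (-‖u‖ ^ 2)) ≤
        ∫ u in (Metric.ball v r)ᶜ, r ^ γ * Real.exp (-‖u‖ ^ 2) := by
      refine setIntegral_mono_on hint.integrableOn
        ((integrable_gauss.const_mul _).integrableOn) measurableSet_ball.compl fun u hu => ?_
      have hge : r ≤ ‖u - v‖ := by
        simp only [mem_compl_iff, Metric.mem_ball, dist_eq_norm, not_lt] at hu
        exact hu
      exact mul_le_mul_of_nonneg_right (Real.rpow_le_rpow_of_nonpos hr hge hγ0.le)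
        (Real.exp_pos _).le
    refine hstep.trans ?_
    rw [MeasureTheory.integral_const_mul]
    have h2 : (∫ u in (Metric.ball v r)ᶜ, Real.exp (-‖u‖ ^ 2)) ≤ G :=
      setIntegral_le_integral integrable_gauss (ae_of_all _ fun u => (Real.exp_pos _).le)
    have hrγ : r ^ γ = (1 + t) ^ γ / (2 : ℝ) ^ γ := by
      rw [hrdef, Real.div_rpow (by linarith) (by norm_num)]
    calc r ^ γ * (∫ u in (Metric.ball v r)ᶜ, Real.exp (-‖u‖ ^ 2)) ≤ r ^ γ * G :=
          mul_le_mul_of_nonneg_left h2 (rpow_nonneg hr.le _)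
      _ = G / (2 : ℝ) ^ γ * (1 + t) ^ γ := by rw [hrγ]; ring
  have hmain : (J1 + (1 + t) ^ (3 : ℕ) * Vb) * E ≤ 24576 * (J1 + Vb) * (1 + t) ^ γ := by
    have h1 : J1 + (1 + t) ^ (3 : ℕ) * Vb ≤ (1 + t) ^ (3 : ℕ) * (J1 + Vb) := by
      have hp1 : (1 : ℝ) ≤ (1 + t) ^ (3 : ℕ) := one_le_pow₀ hb1
      nlinarith
    have h2 : (1 + t) ^ (3 : ℕ) * E ≤ 24576 * (1 + t) ^ γ := by
      have key := decay_bound t ht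
      have e3 : ((1 + t) : ℝ) ^ (3 : ℕ) = (1 + t) ^ ((3 : ℝ) - γ) * (1 + t) ^ γ := by
        rw [← Real.rpow_add (by linarith), sub_add_cancel, ← Real.rpow_natCast (1 + t) 3]
        norm_num
      have e6 : ((1 + t) : ℝ) ^ ((3 : ℝ) - γ) ≤ (1 + t) ^ (6 : ℕ) := by
        rw [← Real.rpow_natCast (1 + t) 6]
        exact Real.rpow_le_rpow_of_exponent_le hb1 (by push_cast; linarith)
      have hγp : 0 < ((1 + t) : ℝ) ^ γ := Real.rpow_pos_of_pos (by linarith) _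
      calc (1 + t) ^ (3 : ℕ) * E = (1 + t) ^ ((3 : ℝ) - γ) * E * (1 + t) ^ γ := by
            rw [e3]; ring
        _ ≤ (1 + t) ^ (6 : ℕ) * E * (1 + t) ^ γ := by
            refine mul_le_mul_of_nonneg_right (mul_le_mul_of_nonneg_right e6 hEnn) hγp.le
        _ ≤ 24576 * (1 + t) ^ γ := by
            refine mul_le_mul_of_nonneg_right ?_ hγp.le
            rw [hEdef, hmdef]
            calc (1 + t) ^ (6 : ℕ) * Real.exp (-(max 0 ((t - 1) / 2)) ^ 2)
                = Real.exp (-(max 0 ((t - 1) / 2)) ^ 2) * (1 + t) ^ (6 : ℕ) := by ring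
              _ ≤ 24576 := decay_bound t ht
    calc (J1 + (1 + t) ^ (3 : ℕ) * Vb) * E ≤ ((1 + t) ^ (3 : ℕ) * (J1 + Vb)) * E :=
          mul_le_mul_of_nonneg_right h1 hEnn
      _ = (J1 + Vb) * ((1 + t) ^ (3 : ℕ) * E) := by ring
      _ ≤ (J1 + Vb) * (24576 * (1 + t) ^ γ) :=
          mul_le_mul_of_nonneg_left h2 (by linarith)
      _ = 24576 * (J1 + Vb) * (1 + t) ^ γ := by ring
  calc (∫ u : R3, ‖u - v‖ ^ γ * Real.exp (-‖u‖ ^ 2))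
      = (∫ u in Metric.ball v r, ‖u - v‖ ^ γ * Real.exp (-‖u‖ ^ 2)) +
        ∫ u in (Metric.ball v r)ᶜ, ‖u - v‖ ^ γ * Real.exp (-‖u‖ ^ 2) := hsplit.symm
    _ ≤ (J1 + (1 + t) ^ (3 : ℕ) * Vb) * E + G / (2 : ℝ) ^ γ * (1 + t) ^ γ :=
        add_le_add hterm1 hterm2
    _ ≤ 24576 * (J1 + Vb) * (1 + t) ^ γ + G / (2 : ℝ) ^ γ * (1 + t) ^ γ :=
        add_le_add hmain le_rfl
    _ = (24576 * (J1 + Vb) + G / (2 : ℝ) ^ γ) * (1 + t) ^ γ := by ring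

end AuxNu

/-- For γ ∈ (−3,0), under the Grad angular cutoff and assuming
∫_{𝕊²} B(ω) dω > 0, the collision frequency ν is equivalent to the weight
w(v) = (1+|v|)^γ: there are 0 < c ≤ C with c(1+|v|)^γ ≤ ν(v) ≤ C(1+|v|)^γ for all v. -/
theorem nu_equiv_weight
    (γ : ℝ) (hγ : γ ∈ Set.Ioo (-3 : ℝ) 0)
    (B : Sphere2 → ℝ) (C₀ : ℝ) (hC₀ : 0 < C₀) (hBmeas : Measurable B)
    (hB : ∀ ω, 0 ≤ B ω ∧ B ω ≤ C₀)
    (hBpos : 0 < ∫ ω : Sphere2, B ω ∂sphMeasure) :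
    ∃ c C : ℝ, 0 < c ∧ c ≤ C ∧
      ∀ v : R3, c * wt γ v ≤ nu γ B v ∧ nu γ B v ≤ C * wt γ v := by
  obtain ⟨hγl, hγr⟩ := hγ
  set S := ∫ ω : Sphere2, B ω ∂sphMeasure with hSdef
  set J1 := ∫ x in Metric.ball (0 : R3) 1, ‖x‖ ^ γ with hJ1def
  set Vb := ((volume : Measure R3) (Metric.ball 0 1)).toReal with hVbdef
  set G := ∫ u : R3, Real.exp (-‖u‖ ^ 2) with hGdef
  have hJ1nn : 0 ≤ J1 :=
    setIntegral_nonneg measurableSet_ball fun x _ => rpow_nonneg (norm_nonneg _) _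
  have hGnn : 0 ≤ G := integral_nonneg fun u => (Real.exp_pos _).le
  have hVbpos : 0 < Vb := by
    rw [hVbdef]
    exact ENNReal.toReal_pos (Metric.measure_ball_pos volume 0 one_pos).ne' measure_ball_lt_top.ne
  have hnu : ∀ v : R3, nu γ B v = (∫ u : R3, ‖u - v‖ ^ γ * Real.exp (-‖u‖ ^ 2)) * S := by
    intro v
    unfold nu
    have hinner : ∀ u : R3,
        (∫ ω : Sphere2, ‖u - v‖ ^ γ * B ω * Real.exp (-‖u‖ ^ 2) ∂sphMeasure) =
          (‖u - v‖ ^ γ * Real.exp (-‖u‖ ^ 2)) * S := by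
      intro u
      rw [hSdef, ← MeasureTheory.integral_const_mul]
      congr 1
      funext ω
      ring
    simp_rw [hinner]
    rw [MeasureTheory.integral_mul_const]
  set c₁ := Real.exp (-1) * Vb with hc₁def
  set C₁ := 24576 * (J1 + Vb) + G / (2 : ℝ) ^ γ with hC₁def
  refine ⟨c₁ * S, max (c₁ * S) (C₁ * S), by positivity, le_max_left _ _, fun v => ?_⟩
  have hwt : wt γ v = (1 + ‖v‖) ^ γ := rfl
  have hwtpos : 0 < wt γ v := by
    rw [hwt]
    exact Real.rpow_pos_of_pos (by nlinarith [norm_nonneg v]) _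
  constructor
  · have h := I_lower hγl hγr v
    rw [hnu v]
    calc c₁ * S * wt γ v = (Real.exp (-1) * Vb * (1 + ‖v‖) ^ γ) * S := by
          rw [hwt, hc₁def]; ring
      _ ≤ (∫ u : R3, ‖u - v‖ ^ γ * Real.exp (-‖u‖ ^ 2)) * S :=
          mul_le_mul_of_nonneg_right h hBpos.le
  · have h := I_upper hγl hγr v
    rw [hnu v]
    calc (∫ u : R3, ‖u - v‖ ^ γ * Real.exp (-‖u‖ ^ 2)) * S ≤ (C₁ * (1 + ‖v‖) ^ γ) * S := by
          refine mul_le_mul_of_nonneg_right ?_ hBpos.le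
          exact h
      _ = (C₁ * S) * wt γ v := by rw [hwt]; ring
      _ ≤ max (c₁ * S) (C₁ * S) * wt γ v :=
          mul_le_mul_of_nonneg_right (le_max_right _ _) hwtpos.le
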